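/- Fix integers m ≥ 1 and n ≥ 1, and let P be the poset of colored set partitions of type (m,n) ordered by refinement, whose minimum element 0̂ is the partition consisting of the block {0} and all singletons {(i,c)}. Let σ ∈ P have km+1 blocks, let its zero block have cardinality b = lm+1, and let b_1,…,b_k be the cardinalities of one block chosen from each of the k orbits of non-zero blocks (all m blocks in an orbit have the same cardinality). Then the Möbius function of P satisfies μ(0̂, σ) = (−1)^{n−k} · (Π_{j=0}^{l−1} (jm+1)) · Π_{j=1}^{k} (b_j − 1)!. -/

import Mathlib

open Finset

/-- The colored ground set `X_{m,n} = {0} ⊔ ({1,…,n} × ℤ/mℤ)`, with `none` as basepoint. -/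
abbrev ColoredSet (m n : ℕ) := Option (Fin n × ZMod m)

/-- The action of `c ∈ ℤ/mℤ` on `X_{m,n}`: fixes the basepoint and shifts colors. -/
def shift {m n : ℕ} (c : ZMod m) : ColoredSet m n → ColoredSet m n :=
  Option.map fun p => (p.1, p.2 + c)

/-- A setoid on `X_{m,n}` is a colored set partition of type `(m,n)` if the `ℤ/mℤ`-action
maps blocks to blocks and the induced action on the blocks not containing the basepoint
is free. -/
def IsColored {m n : ℕ} (σ : Setoid (ColoredSet m n)) : Prop :=
  (∀ (c : ZMod m) (x y : ColoredSet m n), σ.r x y → σ.r (shift c x) (shift c y)) ∧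
  (∀ (c : ZMod m) (x : ColoredSet m n), ¬ σ.r x none → σ.r (shift c x) x → c = 0)

namespace Stmt17

/-- Sum of cardinalities of a pairwise-disjoint finite collection of finite sets. -/
lemma ncard_sUnion {γ : Type*} [Finite γ] (𝒞 : Set (Set γ))
    (hdisj : 𝒞.Pairwise Disjoint) :
    ∑ᶠ S ∈ 𝒞, S.ncard = (⋃₀ 𝒞).ncard := by
  have hfin : 𝒞.Finite := Set.toFinite _
  revert hdisj
  refine Set.Finite.induction_on
    (motive := fun 𝒞 _ => 𝒞.Pairwise Disjoint → ∑ᶠ S ∈ 𝒞, S.ncard = (⋃₀ 𝒞).ncard) 𝒞 hfin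
    (by simp) ?_
  intro S 𝒞 hS hfin ih hdisj
  have hd : Disjoint S (⋃₀ 𝒞) := Set.disjoint_sUnion_right.2 fun T hT =>
    hdisj (Set.mem_insert _ _) (Set.mem_insert_of_mem _ hT) (fun h => hS (h ▸ hT))
  rw [finsum_mem_insert _ hS hfin, Set.sUnion_insert,
    Set.ncard_union_eq hd (Set.toFinite _) (Set.toFinite _),
    ih (hdisj.mono (Set.subset_insert _ _))]

variable {m n : ℕ}

@[simp] lemma shift_none (c : ZMod m) : shift (n := n) c none = none := rfl

@[simp] lemma shift_some (c : ZMod m) (i : Fin n) (d : ZMod m) :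
    shift c (some (i, d)) = some (i, d + c) := rfl

lemma shift_shift (c d : ZMod m) (x : ColoredSet m n) :
    shift c (shift d x) = shift (d + c) x := by
  cases x with
  | none => rfl
  | some p => simp [shift, add_assoc]

@[simp] lemma shift_zero (x : ColoredSet m n) : shift 0 x = x := by
  cases x <;> simp [shift]

lemma shift_eq_none_iff {c : ZMod m} {x : ColoredSet m n} : shift c x = none ↔ x = none := by
  cases x <;> simp [shift]

lemma shift_injective (c : ZMod m) : Function.Injective (shift (n := n) c) := by
  intro x y h
  have := congrArg (shift (-c)) h
  simpa [shift_shift] using this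

lemma ground_free {c : ZMod m} {x : ColoredSet m n} (hx : x ≠ none) (h : shift c x = x) :
    c = 0 := by
  cases x with
  | none => exact absurd rfl hx
  | some p =>
    obtain ⟨i, d⟩ := p
    simp only [shift_some, Option.some.injEq, Prod.mk.injEq] at h
    have h2 : d + c = d + 0 := by simpa using h.2
    exact add_left_cancel h2

section rel

variable {τ : Setoid (ColoredSet m n)}

lemma rel_shift (hτ : IsColored τ) {x y : ColoredSet m n} (c : ZMod m) (h : τ.r x y) :
    τ.r (shift c x) (shift c y) := hτ.1 c x y h

lemma rel_shift_iff (hτ : IsColored τ) {x y : ColoredSet m n} (c : ZMod m) :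
    τ.r (shift c x) (shift c y) ↔ τ.r x y := by
  refine ⟨fun h => ?_, rel_shift hτ c⟩
  have := rel_shift hτ (-c) h
  simpa [shift_shift] using this

lemma rel_shift_none_iff (hτ : IsColored τ) {x : ColoredSet m n} (c : ZMod m) :
    τ.r (shift c x) none ↔ τ.r x none := by
  have := rel_shift_iff hτ (x := x) (y := none) c
  simpa using this

lemma free' (hτ : IsColored τ) {x : ColoredSet m n} {c d : ZMod m}
    (hx : ¬ τ.r x none) (h : τ.r (shift c x) (shift d x)) : c = d := by
  have h2 : τ.r (shift (c - d) x) x := by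
    have := rel_shift hτ (-d) h
    simpa [shift_shift, sub_eq_add_neg] using this
  have := hτ.2 (c - d) x hx h2
  linear_combination this

/-- The block of `x`. -/
def cls (τ : Setoid (ColoredSet m n)) (x : ColoredSet m n) : Set (ColoredSet m n) :=
  {y | τ.r x y}

lemma mem_cls {τ : Setoid (ColoredSet m n)} {x y : ColoredSet m n} :
    y ∈ cls τ x ↔ τ.r x y := Iff.rfl

lemma cls_eq_iff {τ : Setoid (ColoredSet m n)} {x y : ColoredSet m n} :
    cls τ x = cls τ y ↔ τ.r x y := by
  constructor
  · intro h
    have : y ∈ cls τ y := τ.refl' y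
    rw [← h] at this
    exact this
  · intro h
    ext z
    exact ⟨fun hz => τ.trans' (τ.symm' h) hz, fun hz => τ.trans' h hz⟩

lemma shift_image_cls (hτ : IsColored τ) (c : ZMod m) (x : ColoredSet m n) :
    shift c '' cls τ x = cls τ (shift c x) := by
  ext z
  constructor
  · rintro ⟨y, hy, rfl⟩
    exact rel_shift hτ c hy
  · intro hz
    refine ⟨shift (-c) z, ?_, by simp [shift_shift]⟩
    have := rel_shift hτ (-c) hz
    simpa [shift_shift, mem_cls] using this

/-- The orbit-block of `x`: union of the `m` blocks in the shift-orbit of `x`'s block. -/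
def obl (τ : Setoid (ColoredSet m n)) (x : ColoredSet m n) : Set (ColoredSet m n) :=
  {y | ∃ c : ZMod m, τ.r (shift c x) y}

lemma mem_obl {τ : Setoid (ColoredSet m n)} {x y : ColoredSet m n} :
    y ∈ obl τ x ↔ ∃ c : ZMod m, τ.r (shift c x) y := Iff.rfl

lemma self_mem_obl (τ : Setoid (ColoredSet m n)) (x : ColoredSet m n) : x ∈ obl τ x :=
  ⟨0, by simpa using τ.refl' x⟩

lemma obl_eq_of_mem (hτ : IsColored τ) {x y : ColoredSet m n} (h : y ∈ obl τ x) :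
    obl τ y = obl τ x := by
  obtain ⟨c, hc⟩ := h
  ext z
  constructor
  · rintro ⟨d, hd⟩
    refine ⟨c + d, τ.trans' ?_ hd⟩
    have := rel_shift hτ d hc
    simpa [shift_shift] using this
  · rintro ⟨d, hd⟩
    refine ⟨d - c, ?_⟩
    have h2 : τ.r (shift (d - c) y) (shift d x) := by
      have := rel_shift hτ (d - c) (τ.symm' hc)
      simpa [shift_shift, sub_add_cancel] using this
    exact τ.trans' h2 hd

lemma not_rel_none_of_mem_obl (hτ : IsColored τ) {x y : ColoredSet m n}
    (hx : ¬ τ.r x none) (h : y ∈ obl τ x) : ¬ τ.r y none := by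
  obtain ⟨c, hc⟩ := h
  intro hy
  exact ((rel_shift_none_iff hτ c).1 (τ.trans' hc hy) : τ.r x none) |> hx

/-- The set of orbit-blocks not containing the basepoint. -/
def orbitSets (τ : Setoid (ColoredSet m n)) : Set (Set (ColoredSet m n)) :=
  {S | ∃ x, ¬ τ.r x none ∧ S = obl τ x}

lemma obl_mem_orbitSets {τ : Setoid (ColoredSet m n)} {x : ColoredSet m n}
    (hx : ¬ τ.r x none) : obl τ x ∈ orbitSets τ := ⟨x, hx, rfl⟩

lemma orbitSets_pairwise (hτ : IsColored τ) : (orbitSets τ).Pairwise Disjoint := by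
  rintro S ⟨x, hx, rfl⟩ T ⟨y, hy, rfl⟩ hne
  rw [Set.disjoint_left]
  intro z hzx hzy
  exact hne ((obl_eq_of_mem hτ hzx).symm.trans (obl_eq_of_mem hτ hzy))

lemma sUnion_orbitSets (hτ : IsColored τ) :
    ⋃₀ orbitSets τ = {x | ¬ τ.r x none} := by
  ext z
  constructor
  · rintro ⟨S, ⟨x, hx, rfl⟩, hz⟩
    exact not_rel_none_of_mem_obl hτ hx hz
  · intro hz
    exact ⟨obl τ z, obl_mem_orbitSets hz, self_mem_obl τ z⟩

lemma ncard_obl (hτ : IsColored τ) {x : ColoredSet m n} (hx : ¬ τ.r x none) :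
    (obl τ x).ncard = m * Nat.card {y // τ.r x y} := by
  rw [← Nat.card_coe_set_eq]
  have e : ZMod m × {y // τ.r x y} ≃ (obl τ x : Set (ColoredSet m n)) := by
    refine Equiv.ofBijective (fun p => ⟨shift p.1 p.2.1, p.1, rel_shift hτ p.1 p.2.2⟩) ⟨?_, ?_⟩
    · rintro ⟨c, y, hy⟩ ⟨c', y', hy'⟩ h
      replace h : shift c y = shift c' y' := congrArg Subtype.val h
      have hyy : y' = shift (c - c') y := by
        have := congrArg (shift (-c')) h
        simpa [shift_shift, sub_eq_add_neg] using this.symm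
      have hcc : c = c' := by
        have h1 : τ.r (shift (c - c') x) (shift (c - c') y) := rel_shift hτ _ hy
        have h2 : τ.r x (shift (c - c') y) := hyy ▸ hy'
        have h3 : τ.r (shift (c - c') x) x := τ.trans' h1 (τ.symm' h2)
        have := hτ.2 (c - c') x hx h3
        linear_combination this
      subst hcc
      have : y = y' := shift_injective c (by simpa using h)
      simp [this]
    · rintro ⟨z, c, hc⟩
      refine ⟨⟨c, ⟨shift (-c) z, ?_⟩⟩, ?_⟩
      · have := rel_shift hτ (-c) hc
        simpa [shift_shift] using this
      · simp [shift_shift]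
  rw [← Nat.card_congr e, Nat.card_prod, Nat.card_zmod]

end rel

section counting

variable [NeZero m] {τ : Setoid (ColoredSet m n)}

lemma bot_r {γ : Type*} {x y : γ} : (⊥ : Setoid γ).r x y ↔ x = y := Iff.rfl

lemma colored_bot : IsColored (⊥ : Setoid (ColoredSet m n)) := by
  constructor
  · intro c x y h
    rw [bot_r] at h
    subst h
    exact (⊥ : Setoid (ColoredSet m n)).refl' _
  · intro c x hx h
    rw [bot_r] at h
    exact ground_free (fun he => hx (by rw [bot_r, he])) h

/-- Sum of a constant over a finite set. -/
lemma finsum_mem_nat_const {γ : Type*} (s : Set γ) (hs : s.Finite) (c : ℕ) :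
    ∑ᶠ S ∈ s, c = s.ncard * c := by
  rw [finsum_mem_eq_finite_toFinset_sum _ hs, Finset.sum_const, smul_eq_mul,
    Set.ncard_eq_toFinset_card _ hs]

noncomputable def zsize (τ : Setoid (ColoredSet m n)) : ℕ := Nat.card {x // τ.r x none}

noncomputable def ll (τ : Setoid (ColoredSet m n)) : ℕ := (zsize τ - 1) / m

noncomputable def kk (τ : Setoid (ColoredSet m n)) : ℕ := (orbitSets τ).ncard

noncomputable def FF (m n : ℕ) (τ : Setoid (ColoredSet m n)) : ℤ :=
  (-1) ^ (n - kk τ) * (∏ j ∈ range (ll τ), ((j * m + 1 : ℕ) : ℤ)) *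
    ∏ᶠ S ∈ orbitSets τ, ((S.ncard / m - 1).factorial : ℤ)

lemma zsize_eq_ncard : zsize τ = Set.ncard {x | τ.r x none} :=
  Nat.card_coe_set_eq _

/-- the ground-shift-orbit of a point -/
def sho (x : ColoredSet m n) : Set (ColoredSet m n) := Set.range fun c : ZMod m => shift c x

lemma ncard_sho {x : ColoredSet m n} (hx : x ≠ none) : (sho x).ncard = m := by
  rw [sho, ← Nat.card_coe_set_eq, Nat.card_range_of_injective, Nat.card_zmod]
  intro c d h
  have h2 : shift (c - d) x = x := by
    have := congrArg (shift (-d)) h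
    simpa [shift_shift, sub_eq_add_neg] using this
  have := ground_free hx h2
  linear_combination this

lemma sho_shift (x : ColoredSet m n) (e : ZMod m) : sho (shift e x) = sho x := by
  ext z
  constructor
  · rintro ⟨c, rfl⟩
    exact ⟨e + c, by show shift (e + c) x = shift c (shift e x); rw [shift_shift]⟩
  · rintro ⟨c, rfl⟩
    refine ⟨c - e, ?_⟩
    show shift (c - e) (shift e x) = shift c x
    rw [shift_shift]
    congr 1
    ring

lemma zsize_eq (hτ : IsColored τ) : zsize τ = m * ll τ + 1 := by
  classical
  have hm : 1 ≤ m := Nat.one_le_iff_ne_zero.2 (NeZero.ne m)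
  set Z : Set (ColoredSet m n) := {x | τ.r x none} with hZ
  set Z' : Set (ColoredSet m n) := Z \ {none} with hZ'
  have hnone : none ∈ Z := τ.refl' none
  have h1 : Z.ncard = Z'.ncard + 1 := by
    have h0 : insert none Z' = Z := by
      rw [hZ', Set.insert_diff_singleton, Set.insert_eq_of_mem hnone]
    rw [← h0, Set.ncard_insert_of_notMem (by simp [hZ']) (Set.toFinite _)]
  set C : Set (Set (ColoredSet m n)) := {S | ∃ x, x ≠ none ∧ τ.r x none ∧ S = sho x} with hC
  have hdisj : C.Pairwise Disjoint := by
    rintro S ⟨x, hx, hxz, rfl⟩ T ⟨y, hy, hyz, rfl⟩ hne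
    rw [Set.disjoint_left]
    intro z ⟨c, hc⟩ ⟨d, hd⟩
    refine hne ?_
    have : y = shift (c - d) x := by
      have := congrArg (shift (-d)) (hc.trans hd.symm)
      simpa [shift_shift, sub_eq_add_neg] using this.symm
    rw [this, sho_shift]
  have hunion : ⋃₀ C = Z' := by
    ext z
    constructor
    · rintro ⟨S, ⟨x, hx, hxz, rfl⟩, c, rfl⟩
      exact ⟨(rel_shift_none_iff hτ c).2 hxz, by simp [shift_eq_none_iff, hx]⟩
    · rintro ⟨hz, hz2⟩
      exact ⟨sho z, ⟨z, by simpa using hz2, hz, rfl⟩, 0, by simp⟩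
  have hcard : ∀ S ∈ C, S.ncard = m := by
    rintro S ⟨x, hx, hxz, rfl⟩
    exact ncard_sho hx
  have h2 : Z'.ncard = C.ncard * m := by
    rw [← hunion, ← ncard_sUnion C hdisj, finsum_mem_congr rfl hcard,
      finsum_mem_nat_const _ (Set.toFinite _)]
  have h3 : zsize τ = m * C.ncard + 1 := by
    rw [zsize_eq_ncard, ← hZ, h1, h2, mul_comm]
  rw [h3, ll, h3]
  have h4 : (m * C.ncard + 1 - 1) / m = C.ncard := by
    simp [Nat.mul_div_cancel_left _ (show 0 < m by omega)]
  rw [h4]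

lemma sum_ncard_orbitSets (hτ : IsColored τ) :
    ∑ᶠ S ∈ orbitSets τ, S.ncard = Set.ncard {x | ¬ τ.r x none} := by
  rw [ncard_sUnion _ (orbitSets_pairwise hτ), sUnion_orbitSets hτ]

lemma card_ground : Nat.card (ColoredSet m n) = n * m + 1 := by
  rw [Finite.card_option, Nat.card_prod, Nat.card_zmod, Nat.card_eq_fintype_card,
    Fintype.card_fin]

lemma kk_le (hτ : IsColored τ) : kk τ ≤ n := by
  classical
  have hm : 1 ≤ m := Nat.one_le_iff_ne_zero.2 (NeZero.ne m)
  have h1 : ∀ S ∈ orbitSets τ, m ≤ S.ncard := by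
    rintro S ⟨x, hx, rfl⟩
    rw [ncard_obl hτ hx]
    haveI : Nonempty {y // τ.r x y} := ⟨⟨x, τ.refl' x⟩⟩
    have : 0 < Nat.card {y // τ.r x y} := Nat.card_pos (α := {y // τ.r x y})
    nlinarith
  have hfin := Set.toFinite (orbitSets τ)
  have h2 : m * kk τ ≤ ∑ᶠ S ∈ orbitSets τ, S.ncard := by
    rw [finsum_mem_eq_finite_toFinset_sum _ hfin]
    calc m * kk τ = ∑ _S ∈ hfin.toFinset, m := by
          rw [Finset.sum_const, smul_eq_mul, mul_comm, kk, Set.ncard_eq_toFinset_card _ hfin]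
      _ ≤ _ := Finset.sum_le_sum (fun S hS => h1 S (by simpa using hS))
  have h3 : Set.ncard {x : ColoredSet m n | ¬ τ.r x none} ≤ n * m := by
    have hc := Set.ncard_add_ncard_compl ({x : ColoredSet m n | τ.r x none}) (Set.toFinite _) (Set.toFinite _)
    rw [card_ground] at hc
    have hz : 1 ≤ Set.ncard {x : ColoredSet m n | τ.r x none} := by
      rw [← zsize_eq_ncard]
      haveI : Nonempty {x : ColoredSet m n // τ.r x none} := ⟨⟨none, τ.refl' none⟩⟩
      exact Nat.card_pos (α := {x // τ.r x none})
    have hcc : ({x : ColoredSet m n | τ.r x none}ᶜ : Set _) = {x | ¬ τ.r x none} := by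
      ext z; simp
    rw [hcc] at hc
    omega
  rw [sum_ncard_orbitSets hτ] at h2
  have := h2.trans h3
  calc kk τ = m * kk τ / m := by rw [Nat.mul_div_cancel_left _ (by omega)]
    _ ≤ n * m / m := Nat.div_le_div_right this
    _ = n := by rw [Nat.mul_div_cancel _ (by omega)]

lemma card_quotient (hτ : IsColored τ) : Nat.card (Quotient τ) = 1 + m * kk τ := by
  classical
  have h1 : Nat.card (Quotient τ) =
      Nat.card {q : Quotient τ // q ≠ Quotient.mk τ none} + 1 := by
    rw [← Nat.card_congr (Equiv.optionSubtypeNe (Quotient.mk τ none)), Finite.card_option]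
  have hval : ∀ p : ZMod m × {S // S ∈ orbitSets τ},
      Quotient.mk τ (shift p.1 (Classical.choose p.2.2)) ≠ Quotient.mk τ none := by
    intro p
    have hspec := Classical.choose_spec p.2.2
    exact fun h => hspec.1 ((rel_shift_none_iff hτ p.1).1 (Quotient.exact h))
  have h2 : Nat.card {q : Quotient τ // q ≠ Quotient.mk τ none} =
      Nat.card (ZMod m × {S // S ∈ orbitSets τ}) := by
    refine (Nat.card_congr (Equiv.ofBijective (fun p => ⟨_, hval p⟩) ⟨?_, ?_⟩)).symm
    · rintro ⟨c, P⟩ ⟨d, Q⟩ h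
      simp only [Subtype.mk.injEq] at h
      have h' := Quotient.exact h
      obtain ⟨hx, hxS⟩ := Classical.choose_spec P.2
      obtain ⟨hy, hyT⟩ := Classical.choose_spec Q.2
      have hST : P = Q := by
        refine Subtype.ext ?_
        rw [hxS, hyT]
        have hmem : shift d (Classical.choose Q.2) ∈ obl τ (Classical.choose P.2) := ⟨c, h'⟩
        have h2 := obl_eq_of_mem hτ hmem
        have h3 : obl τ (shift d (Classical.choose Q.2)) = obl τ (Classical.choose Q.2) :=
          obl_eq_of_mem hτ ⟨d, τ.refl' _⟩
        rw [← h2, h3]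
      subst hST
      have : c = d := free' hτ hx h'
      simp [this]
    · rintro ⟨q, hq⟩
      obtain ⟨x, rfl⟩ := Quotient.exists_rep q
      have hx : ¬ τ.r x none := fun h => hq (Quotient.sound h)
      have hS : obl τ x ∈ orbitSets τ := ⟨x, hx, rfl⟩
      obtain ⟨hx1, hx1S⟩ := Classical.choose_spec hS
      have hmem : x ∈ obl τ (Classical.choose hS) := by
        rw [← hx1S]
        exact self_mem_obl τ x
      obtain ⟨c, hc⟩ := hmem
      exact ⟨⟨c, ⟨obl τ x, hS⟩⟩, Subtype.ext (Quotient.sound hc)⟩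
  rw [h1, h2, Nat.card_prod, Nat.card_zmod, show Nat.card {S // S ∈ orbitSets τ} = (orbitSets τ).ncard from Nat.card_coe_set_eq _, kk]
  ring

end counting

section bot

variable [NeZero m]

def col (i : Fin n) : Set (ColoredSet m n) := {y | ∃ c : ZMod m, y = some (i, c)}

lemma obl_bot (i : Fin n) (d : ZMod m) :
    obl (⊥ : Setoid (ColoredSet m n)) (some (i, d)) = col i := by
  ext z
  simp only [obl, bot_r, Set.mem_setOf_eq, col]
  constructor
  · rintro ⟨c, rfl⟩
    exact ⟨d + c, rfl⟩
  · rintro ⟨c, rfl⟩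
    refine ⟨c - d, ?_⟩
    simp

lemma orbitSets_bot : orbitSets (⊥ : Setoid (ColoredSet m n)) = Set.range col := by
  ext S
  constructor
  · rintro ⟨x, hx, rfl⟩
    rw [bot_r] at hx
    match x with
    | none => exact absurd rfl hx
    | some (i, d) => exact ⟨i, (obl_bot i d).symm⟩
  · rintro ⟨i, rfl⟩
    exact ⟨some (i, 0), by rw [bot_r]; simp, (obl_bot i 0).symm⟩

lemma col_injective : Function.Injective (col (m := m) (n := n)) := by
  intro i j h
  have : (some (i, (0 : ZMod m)) : ColoredSet m n) ∈ col j := by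
    rw [← h]; exact ⟨0, rfl⟩
  obtain ⟨c, hc⟩ := this
  simpa using congrArg (Option.map Prod.fst) hc

lemma ncard_col (i : Fin n) : (col (m := m) i).ncard = m := by
  have : col (m := m) i = Set.range (fun c : ZMod m => (some (i, c) : ColoredSet m n)) := by
    ext z
    simp [col, Set.range, eq_comm]
  rw [this, ← Nat.card_coe_set_eq, Nat.card_range_of_injective, Nat.card_zmod]
  intro c d h
  simpa using h

lemma kk_bot : kk (⊥ : Setoid (ColoredSet m n)) = n := by
  rw [kk, orbitSets_bot, ← Nat.card_coe_set_eq, Nat.card_range_of_injective col_injective,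
    Nat.card_eq_fintype_card, Fintype.card_fin]

lemma zsize_bot : zsize (⊥ : Setoid (ColoredSet m n)) = 1 := by
  haveI : Unique {x : ColoredSet m n // (⊥ : Setoid (ColoredSet m n)).r x none} :=
    ⟨⟨⟨none, (⊥ : Setoid (ColoredSet m n)).refl' none⟩⟩, fun a => Subtype.ext (a.2 : a.1 = none)⟩
  exact Nat.card_unique

lemma FF_bot : FF m n ⊥ = 1 := by
  rw [FF, kk_bot, ll, zsize_bot]
  simp only [Nat.sub_self, pow_zero, Nat.zero_div, range_zero, prod_empty, one_mul, mul_one]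
  refine finprod_mem_of_eqOn_one ?_
  intro S hS
  rw [orbitSets_bot] at hS
  obtain ⟨i, rfl⟩ := hS
  simp [ncard_col, Nat.div_self (Nat.pos_of_ne_zero (NeZero.ne m))]

end bot

section saturated

variable [NeZero m]

lemma sum_ncard_classes (τ : Setoid (ColoredSet m n)) (W : Set (ColoredSet m n))
    (hsat : ∀ y ∈ W, cls τ y ⊆ W) :
    ∑ᶠ S ∈ {S | ∃ y ∈ W, S = cls τ y}, S.ncard = W.ncard := by
  rw [ncard_sUnion]
  · congr 1
    ext z
    constructor
    · rintro ⟨S, ⟨y, hy, rfl⟩, hz⟩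
      exact hsat y hy hz
    · intro hz
      exact ⟨cls τ z, ⟨z, hz, rfl⟩, τ.refl' z⟩
  · rintro S ⟨y, hy, rfl⟩ T ⟨z, hz, rfl⟩ hne
    rw [Set.disjoint_left]
    intro w hw hw'
    exact hne (cls_eq_iff.2 (τ.trans' hw (τ.symm' hw')))

end saturated

section step

variable [NeZero m] {n' : ℕ}

/-- Embedding of the smaller ground set (first `n'` columns). -/
def emb : ColoredSet m n' → ColoredSet m (n' + 1) := Option.map (Prod.map Fin.castSucc id)

/-- Base of the removed column. -/
def x0 : ColoredSet m (n' + 1) := some (Fin.last n', 0)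

@[simp] lemma emb_none : emb (m := m) (n' := n') none = none := rfl

@[simp] lemma emb_some (j : Fin n') (c : ZMod m) :
    emb (m := m) (some (j, c)) = some (j.castSucc, c) := rfl

lemma emb_injective : Function.Injective (emb (m := m) (n' := n')) :=
  Option.map_injective (fun a b h => by
    obtain ⟨i, c⟩ := a; obtain ⟨j, d⟩ := b
    simp only [Prod.map, Prod.mk.injEq] at h
    exact Prod.ext (Fin.castSucc_injective _ h.1) h.2)

lemma emb_eq_none_iff {y : ColoredSet m n'} : emb y = none ↔ y = none := by
  cases y <;> simp [emb]

lemma emb_shift (c : ZMod m) (y : ColoredSet m n') :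
    emb (shift c y) = shift c (emb y) := by
  cases y with
  | none => rfl
  | some p => rfl

lemma emb_ne_last (y : ColoredSet m n') (c : ZMod m) :
    emb y ≠ some (Fin.last n', c) := by
  cases y with
  | none => simp
  | some p =>
    obtain ⟨j, d⟩ := p
    simp only [emb_some, ne_eq, Option.some.injEq, Prod.mk.injEq, not_and]
    intro h
    exact absurd h (Fin.castSucc_lt_last j).ne

@[simp] lemma shift_x0 (c : ZMod m) : shift c (x0 (m := m) (n' := n')) = some (Fin.last n', c) := by
  simp [x0]

lemma cases_ground (x : ColoredSet m (n' + 1)) :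
    (∃ y, x = emb y) ∨ ∃ c, x = some (Fin.last n', c) := by
  match x with
  | none => exact Or.inl ⟨none, rfl⟩
  | some (i, c) =>
    by_cases h : i = Fin.last n'
    · exact Or.inr ⟨c, by rw [h]⟩
    · exact Or.inl ⟨some (i.castPred h, c), by simp⟩

/-- Splitting the large ground set. -/
def split (x : ColoredSet m (n' + 1)) : ColoredSet m n' ⊕ ZMod m :=
  match x with
  | none => Sum.inl none
  | some (i, c) =>
    if h : i = Fin.last n' then Sum.inr c else Sum.inl (some (i.castPred h, c))

@[simp] lemma split_emb (y : ColoredSet m n') : split (emb y) = Sum.inl y := by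
  cases y with
  | none => rfl
  | some p =>
    obtain ⟨j, d⟩ := p
    simp only [emb_some, split]
    rw [dif_neg (Fin.castSucc_lt_last j).ne]
    simp

@[simp] lemma split_last (c : ZMod m) :
    split (some (Fin.last n', c) : ColoredSet m (n' + 1)) = Sum.inr c := by
  simp [split]

/-- Extension of `τ'` making the removed column a new free orbit of singleton blocks. -/
def extN (τ' : Setoid (ColoredSet m n')) : Setoid (ColoredSet m (n' + 1)) :=
  Setoid.ker (fun x => Sum.map (cls τ') id (split x))

/-- Extension of `τ'` attaching the removed column to the (shifts of the) block `S`. -/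
def extS (τ' : Setoid (ColoredSet m n')) (S : Set (ColoredSet m n')) :
    Setoid (ColoredSet m (n' + 1)) :=
  Setoid.ker (fun x => Sum.elim (cls τ') (fun c => shift c '' S) (split x))

lemma extN_r {τ' : Setoid (ColoredSet m n')} {x y : ColoredSet m (n' + 1)} :
    (extN τ').r x y ↔ Sum.map (cls τ') id (split x) = Sum.map (cls τ') id (split y) :=
  Iff.rfl

lemma extS_r {τ' : Setoid (ColoredSet m n')} {S : Set (ColoredSet m n')}
    {x y : ColoredSet m (n' + 1)} :
    (extS τ' S).r x y ↔ Sum.elim (cls τ') (fun c => shift c '' S) (split x)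
      = Sum.elim (cls τ') (fun c => shift c '' S) (split y) :=
  Iff.rfl

@[simp] lemma extN_emb {τ' : Setoid (ColoredSet m n')} {a b : ColoredSet m n'} :
    (extN τ').r (emb a) (emb b) ↔ τ'.r a b := by
  rw [extN_r, split_emb, split_emb]
  simp [cls_eq_iff]

@[simp] lemma extN_last_emb {τ' : Setoid (ColoredSet m n')} {c : ZMod m}
    {b : ColoredSet m n'} :
    ¬ (extN τ').r (some (Fin.last n', c)) (emb b) := by
  rw [extN_r, split_emb, split_last]
  simp

@[simp] lemma extN_last_last {τ' : Setoid (ColoredSet m n')} {c d : ZMod m} :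
    (extN τ').r (some (Fin.last n', c)) (some (Fin.last n', d)) ↔ c = d := by
  rw [extN_r, split_last, split_last]
  simp

@[simp] lemma extS_emb {τ' : Setoid (ColoredSet m n')} {S : Set (ColoredSet m n')}
    {a b : ColoredSet m n'} :
    (extS τ' S).r (emb a) (emb b) ↔ τ'.r a b := by
  rw [extS_r, split_emb, split_emb]
  simp [cls_eq_iff]

@[simp] lemma extS_last_emb {τ' : Setoid (ColoredSet m n')} {S : Set (ColoredSet m n')}
    {c : ZMod m} {b : ColoredSet m n'} :
    (extS τ' S).r (some (Fin.last n', c)) (emb b) ↔ shift c '' S = cls τ' b := by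
  rw [extS_r, split_emb, split_last]
  simp

@[simp] lemma extS_emb_last {τ' : Setoid (ColoredSet m n')} {S : Set (ColoredSet m n')}
    {c : ZMod m} {b : ColoredSet m n'} :
    (extS τ' S).r (emb b) (some (Fin.last n', c)) ↔ cls τ' b = shift c '' S := by
  rw [extS_r, split_emb, split_last]
  simp

@[simp] lemma extS_last_last {τ' : Setoid (ColoredSet m n')} {S : Set (ColoredSet m n')}
    {c d : ZMod m} :
    (extS τ' S).r (some (Fin.last n', c)) (some (Fin.last n', d)) ↔
      shift c '' S = shift d '' S := by
  rw [extS_r, split_last, split_last]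
  simp

lemma shift_zero_image (S : Set (ColoredSet m n')) : shift 0 '' S = S := by
  ext z
  simp [shift_zero]

lemma shift_image_image (c d : ZMod m) (S : Set (ColoredSet m n')) :
    shift c '' (shift d '' S) = shift (d + c) '' S := by
  rw [← Set.image_comp]
  exact Set.image_congr fun y _ => shift_shift c d y

/-- Criterion for `Setoid.ker g` being colored. -/
lemma isColored_ker {N : ℕ} {β : Type*} (g : ColoredSet m N → β) (ψ : ZMod m → β → β)
    (hcomm : ∀ c x, g (shift c x) = ψ c (g x))
    (hinj : ∀ c, Function.Injective (ψ c))
    (hfree : ∀ (c : ZMod m) (x), g x ≠ g none → ψ c (g x) = g x → c = 0) :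
    IsColored (Setoid.ker g) := by
  constructor
  · intro c x y h
    have h' : g x = g y := h
    show g (shift c x) = g (shift c y)
    rw [hcomm, hcomm, h']
  · intro c x hx h
    refine hfree c x (fun he => hx he) ?_
    rw [← hcomm]
    exact h

lemma comap_r {α β : Type*} (f : α → β) (s : Setoid β) (a b : α) :
    (Setoid.comap f s).r a b ↔ s.r (f a) (f b) := Iff.rfl

lemma isColored_extN {τ' : Setoid (ColoredSet m n')} (hτ' : IsColored τ') :
    IsColored (extN τ') := by
  refine isColored_ker _ (fun c => Sum.map (shift c '' ·) (· + c)) ?_ ?_ ?_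
  · intro c x
    rcases cases_ground x with ⟨y, rfl⟩ | ⟨d, rfl⟩
    · rw [← emb_shift]
      simp only [split_emb, Sum.map_inl, Sum.map_inl]
      rw [shift_image_cls hτ' c y]
    · simp only [shift_some, split_last, Sum.map_inr, id_eq]
  · intro c
    exact Function.Injective.sumMap (Set.image_injective.2 (shift_injective c))
      (add_left_injective c)
  · intro c x hx h
    rcases cases_ground x with ⟨y, rfl⟩ | ⟨d, rfl⟩
    · simp only [split_emb, Sum.map_inl, Sum.inl.injEq] at h
      rw [shift_image_cls hτ' c y, cls_eq_iff] at h
      refine hτ'.2 c y ?_ h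
      intro hy
      refine hx ?_
      show Sum.map (cls τ') id (split (emb y)) =
        Sum.map (cls τ') id (split (emb (none : ColoredSet m n')))
      rw [split_emb, split_emb]
      simp [cls_eq_iff, hy]
    · simp only [split_last, Sum.map_inr, id_eq, Sum.inr.injEq] at h
      simpa using h

lemma extS_g_cls {τ' : Setoid (ColoredSet m n')} (hτ' : IsColored τ') (y₀ : ColoredSet m n')
    (x : ColoredSet m (n' + 1)) :
    ∃ z, Sum.elim (cls τ') (fun c => shift c '' cls τ' y₀) (split x) = cls τ' z := by
  rcases cases_ground x with ⟨y, rfl⟩ | ⟨d, rfl⟩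
  · exact ⟨y, by simp⟩
  · exact ⟨shift d y₀, by simp [shift_image_cls hτ' d y₀]⟩

lemma isColored_extS {τ' : Setoid (ColoredSet m n')} (hτ' : IsColored τ')
    (y₀ : ColoredSet m n') : IsColored (extS τ' (cls τ' y₀)) := by
  refine isColored_ker _ (fun c => (shift c '' ·)) ?_ ?_ ?_
  · intro c x
    rcases cases_ground x with ⟨y, rfl⟩ | ⟨d, rfl⟩
    · rw [← emb_shift]
      simp only [split_emb, Sum.elim_inl]
      rw [shift_image_cls hτ' c y]
    · simp only [shift_some, split_last, Sum.elim_inr]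
      rw [shift_image_image]
  · intro c
    exact Set.image_injective.2 (shift_injective c)
  · intro c x hx h
    obtain ⟨z, hz⟩ := extS_g_cls hτ' y₀ x
    rw [hz] at h hx
    have h' : shift c '' cls τ' z = cls τ' z := h
    rw [shift_image_cls hτ' c z, cls_eq_iff] at h'
    refine hτ'.2 c z ?_ h'
    intro hzn
    refine hx ?_
    rw [show (none : ColoredSet m (n' + 1)) = emb (none : ColoredSet m n') from rfl]
    show cls τ' z = Sum.elim (cls τ') (fun c => shift c '' cls τ' y₀) (split (emb (none : ColoredSet m n')))
    rw [split_emb]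
    simp [cls_eq_iff, hzn]

variable {σ : Setoid (ColoredSet m (n' + 1))}

lemma extN_le {τ' : Setoid (ColoredSet m n')} (hle : τ' ≤ Setoid.comap emb σ) :
    extN τ' ≤ σ := by
  rw [Setoid.le_def]
  intro x y h
  rcases cases_ground x with ⟨a, rfl⟩ | ⟨c, rfl⟩ <;>
    rcases cases_ground y with ⟨b, rfl⟩ | ⟨d, rfl⟩
  · exact hle (extN_emb.1 h)
  · exact absurd ((extN τ').symm' h) extN_last_emb
  · exact absurd h extN_last_emb
  · rw [extN_last_last] at h
    subst h
    exact σ.refl' _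

lemma extS_le (hσ : IsColored σ) {τ' : Setoid (ColoredSet m n')} (hτ' : IsColored τ')
    (hle : τ' ≤ Setoid.comap emb σ) {y₀ : ColoredSet m n'} (hy₀ : σ.r x0 (emb y₀)) :
    extS τ' (cls τ' y₀) ≤ σ := by
  have hkey : ∀ c : ZMod m, σ.r (some (Fin.last n', c)) (emb (shift c y₀)) := by
    intro c
    have := hσ.1 c _ _ hy₀
    rw [shift_x0, ← emb_shift] at this
    exact this
  rw [Setoid.le_def]
  intro x y h
  rcases cases_ground x with ⟨a, rfl⟩ | ⟨c, rfl⟩ <;>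
    rcases cases_ground y with ⟨b, rfl⟩ | ⟨d, rfl⟩
  · exact hle (extS_emb.1 h)
  · rw [extS_emb_last, shift_image_cls hτ' d y₀, cls_eq_iff] at h
    exact σ.trans' (hle h) (σ.symm' (hkey d))
  · rw [extS_last_emb, shift_image_cls hτ' c y₀, cls_eq_iff] at h
    exact σ.trans' (hkey c) (hle h)
  · rw [extS_last_last, shift_image_cls hτ' c y₀, shift_image_cls hτ' d y₀, cls_eq_iff] at h
    exact σ.trans' (hkey c) (σ.trans' (hle h) (σ.symm' (hkey d)))

lemma comap_extN {τ' : Setoid (ColoredSet m n')} : Setoid.comap emb (extN τ') = τ' :=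
  Setoid.ext fun a b => extN_emb

lemma comap_extS {τ' : Setoid (ColoredSet m n')} {S : Set (ColoredSet m n')} :
    Setoid.comap emb (extS τ' S) = τ' :=
  Setoid.ext fun a b => extS_emb

/-- Elements of the small ground set whose image lies in the `σ`-block of `x0`. -/
def Wset (σ : Setoid (ColoredSet m (n' + 1))) : Set (ColoredSet m n') :=
  {y | σ.r x0 (emb y)}

/-- Eligible target blocks. -/
def tgt (τ' : Setoid (ColoredSet m n')) (σ : Setoid (ColoredSet m (n' + 1))) :
    Set (Set (ColoredSet m n')) :=
  {S | ∃ y ∈ Wset σ, S = cls τ' y}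

lemma fib_eq (hσ : IsColored σ) {τ' : Setoid (ColoredSet m n')} (hτ' : IsColored τ')
    (hle : τ' ≤ Setoid.comap emb σ) :
    {τ : Setoid (ColoredSet m (n' + 1)) | IsColored τ ∧ τ ≤ σ ∧ Setoid.comap emb τ = τ'} =
      insert (extN τ') (extS τ' '' tgt τ' σ) := by
  ext τ
  constructor
  · rintro ⟨hτ, hτσ, hcom⟩
    have hembr : ∀ a b, τ.r (emb a) (emb b) ↔ τ'.r a b := by
      intro a b
      rw [← hcom]
      exact Iff.rfl
    by_cases hex : ∃ y, τ.r x0 (emb y)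
    · obtain ⟨y₀, hy₀⟩ := hex
      have hkey : ∀ c : ZMod m, τ.r (some (Fin.last n', c)) (emb (shift c y₀)) := by
        intro c
        have := hτ.1 c _ _ hy₀
        rw [shift_x0, ← emb_shift] at this
        exact this
      have hrel : ∀ (c : ZMod m) (b : ColoredSet m n'),
          τ.r (some (Fin.last n', c)) (emb b) ↔ τ'.r (shift c y₀) b := by
        intro c b
        constructor
        · intro h
          exact (hembr _ _).1 (τ.trans' (τ.symm' (hkey c)) h)
        · intro h
          exact τ.trans' (hkey c) ((hembr _ _).2 h)
      refine Set.mem_insert_of_mem _ ⟨cls τ' y₀, ⟨y₀, hτσ hy₀, rfl⟩, ?_⟩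
      refine (Setoid.ext fun x y => ?_).symm
      rcases cases_ground x with ⟨a, rfl⟩ | ⟨c, rfl⟩ <;>
        rcases cases_ground y with ⟨b, rfl⟩ | ⟨d, rfl⟩
      · rw [extS_emb, hembr]
      · rw [extS_emb_last, shift_image_cls hτ' d y₀, cls_eq_iff]
        constructor
        · intro h
          exact τ'.symm' ((hrel d a).1 (τ.symm' h))
        · intro h
          exact τ.symm' ((hrel d a).2 (τ'.symm' h))
      · rw [extS_last_emb, shift_image_cls hτ' c y₀, cls_eq_iff]
        exact hrel c b
      · rw [extS_last_last, shift_image_cls hτ' c y₀, shift_image_cls hτ' d y₀, cls_eq_iff]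
        constructor
        · intro h
          exact (hembr _ _).1 (τ.trans' (τ.symm' (hkey c)) (τ.trans' h (hkey d)))
        · intro h
          exact τ.trans' (hkey c) (τ.trans' ((hembr _ _).2 h) (τ.symm' (hkey d)))
    · have hx0 : ¬ τ.r x0 none := fun h => hex ⟨none, h⟩
      refine Set.mem_insert_iff.2 (Or.inl ?_)
      refine Setoid.ext fun x y => ?_
      have hlast_emb : ∀ (c : ZMod m) (b : ColoredSet m n'),
          ¬ τ.r (some (Fin.last n', c)) (emb b) := by
        intro c b h
        refine hex ⟨shift (-c) b, ?_⟩
        have := hτ.1 (-c) _ _ h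
        rw [← shift_x0 (n' := n') c, shift_shift, add_neg_cancel, shift_zero, ← emb_shift] at this
        exact this
      rcases cases_ground x with ⟨a, rfl⟩ | ⟨c, rfl⟩ <;>
        rcases cases_ground y with ⟨b, rfl⟩ | ⟨d, rfl⟩
      · rw [extN_emb, hembr]
      · exact iff_of_false (fun h => hlast_emb d a (τ.symm' h))
          (fun h => extN_last_emb ((extN τ').symm' h))
      · exact iff_of_false (hlast_emb c b) extN_last_emb
      · rw [extN_last_last]
        constructor
        · intro h
          refine free' hτ hx0 ?_
          rw [shift_x0, shift_x0]
          exact h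
        · rintro rfl
          exact τ.refl' _
  · rintro (rfl | ⟨S, ⟨y₀, hy₀, rfl⟩, rfl⟩)
    · exact ⟨isColored_extN hτ', extN_le hle, comap_extN⟩
    · exact ⟨isColored_extS hτ' y₀, extS_le hσ hτ' hle hy₀, comap_extS⟩

lemma none_eq_emb : (none : ColoredSet m (n' + 1)) = emb none := rfl

/-- The removed column as a set. -/
def Olast : Set (ColoredSet m (n' + 1)) := {x | ∃ c : ZMod m, x = some (Fin.last n', c)}

lemma ncard_Olast : (Olast (m := m) (n' := n')).ncard = m := by
  have : Olast (m := m) (n' := n') =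
      Set.range (fun c : ZMod m => (some (Fin.last n', c) : ColoredSet m (n' + 1))) := by
    ext z
    simp [Olast, Set.range, eq_comm]
  rw [this, ← Nat.card_coe_set_eq, Nat.card_range_of_injective, Nat.card_zmod]
  intro c d h
  simpa using h

lemma emb_image_disjoint_Olast (S' : Set (ColoredSet m n')) :
    Disjoint (emb '' S') (Olast (m := m) (n' := n')) := by
  rw [Set.disjoint_left]
  rintro z ⟨y, _, rfl⟩ ⟨c, hc⟩
  exact emb_ne_last y c hc

lemma ncard_emb_image (S' : Set (ColoredSet m n')) : (emb '' S').ncard = S'.ncard :=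
  Set.ncard_image_of_injective _ emb_injective

variable {τ' : Setoid (ColoredSet m n')}

lemma zsize_extN : zsize (extN τ') = zsize τ' := by
  refine (Nat.card_congr (Equiv.ofBijective
    (fun y => (⟨emb y.1, by rw [none_eq_emb, extN_emb]; exact y.2⟩ :
      {x // (extN τ').r x none})) ⟨?_, ?_⟩)).symm
  · intro a b h
    exact Subtype.ext (emb_injective (congrArg Subtype.val h))
  · rintro ⟨x, hx⟩
    rcases cases_ground x with ⟨y, rfl⟩ | ⟨c, rfl⟩
    · refine ⟨⟨y, ?_⟩, rfl⟩
      rw [none_eq_emb, extN_emb] at hx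
      exact hx
    · rw [none_eq_emb] at hx
      exact absurd hx extN_last_emb

lemma zsize_extS_free (hτ' : IsColored τ') {y₀ : ColoredSet m n'} (hy₀ : ¬ τ'.r y₀ none) :
    zsize (extS τ' (cls τ' y₀)) = zsize τ' := by
  refine (Nat.card_congr (Equiv.ofBijective
    (fun y => (⟨emb y.1, by rw [none_eq_emb, extS_emb]; exact y.2⟩ :
      {x // (extS τ' (cls τ' y₀)).r x none})) ⟨?_, ?_⟩)).symm
  · intro a b h
    exact Subtype.ext (emb_injective (congrArg Subtype.val h))
  · rintro ⟨x, hx⟩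
    rcases cases_ground x with ⟨y, rfl⟩ | ⟨c, rfl⟩
    · refine ⟨⟨y, ?_⟩, rfl⟩
      rw [none_eq_emb, extS_emb] at hx
      exact hx
    · rw [none_eq_emb, extS_last_emb, shift_image_cls hτ' c y₀, cls_eq_iff] at hx
      exact absurd ((rel_shift_none_iff hτ' c).1 hx) hy₀

lemma zset_extS_zero (hτ' : IsColored τ') {y₀ : ColoredSet m n'} (hy₀ : τ'.r y₀ none) :
    {x | (extS τ' (cls τ' y₀)).r x none} =
      emb '' {y | τ'.r y none} ∪ Olast := by
  ext x
  simp only [Set.mem_setOf_eq, Set.mem_union]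
  rcases cases_ground x with ⟨y, rfl⟩ | ⟨c, rfl⟩
  · rw [none_eq_emb, extS_emb]
    constructor
    · intro h
      exact Or.inl ⟨y, h, rfl⟩
    · rintro (⟨z, hz, hzy⟩ | ⟨c, hc⟩)
      · rwa [← emb_injective hzy]
      · exact absurd hc (emb_ne_last y c)
  · rw [none_eq_emb, extS_last_emb, shift_image_cls hτ' c y₀, cls_eq_iff]
    constructor
    · intro _
      exact Or.inr ⟨c, rfl⟩
    · intro _
      exact (rel_shift_none_iff hτ' c).2 hy₀

lemma zsize_extS_zero (hτ' : IsColored τ') {y₀ : ColoredSet m n'} (hy₀ : τ'.r y₀ none) :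
    zsize (extS τ' (cls τ' y₀)) = zsize τ' + m := by
  rw [zsize_eq_ncard, zset_extS_zero hτ' hy₀,
    Set.ncard_union_eq (emb_image_disjoint_Olast _) (Set.toFinite _) (Set.toFinite _),
    ncard_emb_image, ncard_Olast, zsize_eq_ncard]

lemma oblN_emb (y : ColoredSet m n') :
    obl (extN τ') (emb y) = emb '' obl τ' y := by
  ext z
  simp only [mem_obl]
  constructor
  · rintro ⟨c, hc⟩
    rw [← emb_shift] at hc
    rcases cases_ground z with ⟨w, rfl⟩ | ⟨d, rfl⟩
    · exact ⟨w, ⟨c, extN_emb.1 hc⟩, rfl⟩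
    · exact absurd ((extN τ').symm' hc) extN_last_emb
  · rintro ⟨w, ⟨c, hc⟩, rfl⟩
    refine ⟨c, ?_⟩
    rw [← emb_shift, extN_emb]
    exact hc

lemma oblN_last (d : ZMod m) :
    obl (extN τ') (some (Fin.last n', d)) = Olast (m := m) (n' := n') := by
  ext z
  simp only [mem_obl]
  constructor
  · rintro ⟨c, hc⟩
    rw [shift_some] at hc
    rcases cases_ground z with ⟨w, rfl⟩ | ⟨e, rfl⟩
    · exact absurd hc extN_last_emb
    · exact ⟨e, rfl⟩
  · rintro ⟨e, rfl⟩
    refine ⟨e - d, ?_⟩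
    rw [shift_some, extN_last_last]
    ring

lemma not_extN_r_last_none (c : ZMod m) :
    ¬ (extN τ').r (some (Fin.last n', c)) none := by
  rw [none_eq_emb]
  exact extN_last_emb

lemma orbitSets_extN :
    orbitSets (extN τ') = insert (Olast (m := m) (n' := n')) (Set.image emb '' orbitSets τ') := by
  ext S
  constructor
  · rintro ⟨x, hx, rfl⟩
    rcases cases_ground x with ⟨y, rfl⟩ | ⟨c, rfl⟩
    · rw [none_eq_emb, extN_emb] at hx
      exact Set.mem_insert_of_mem _ ⟨obl τ' y, ⟨y, hx, rfl⟩, (oblN_emb y).symm⟩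
    · rw [oblN_last]
      exact Set.mem_insert _ _
  · rintro (rfl | ⟨S', ⟨y, hy, rfl⟩, rfl⟩)
    · exact ⟨some (Fin.last n', 0), not_extN_r_last_none 0, (oblN_last 0).symm⟩
    · refine ⟨emb y, ?_, (oblN_emb y).symm⟩
      rw [none_eq_emb, extN_emb]
      exact hy

section extSobl

variable {y₀ : ColoredSet m n'}

lemma oblS_emb_of_zero (hτ' : IsColored τ') (hy₀ : τ'.r y₀ none) {y : ColoredSet m n'} (hy : ¬ τ'.r y none) :
    obl (extS τ' (cls τ' y₀)) (emb y) = emb '' obl τ' y := by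
  ext z
  simp only [mem_obl]
  constructor
  · rintro ⟨c, hc⟩
    rw [← emb_shift] at hc
    rcases cases_ground z with ⟨w, rfl⟩ | ⟨d, rfl⟩
    · exact ⟨w, ⟨c, extS_emb.1 hc⟩, rfl⟩
    · rw [extS_emb_last, shift_image_cls hτ' d y₀, cls_eq_iff] at hc
      have h1 : τ'.r (shift c y) none := τ'.trans' hc ((rel_shift_none_iff hτ' d).2 hy₀)
      exact absurd ((rel_shift_none_iff hτ' c).1 h1) hy
  · rintro ⟨w, ⟨c, hc⟩, rfl⟩
    refine ⟨c, ?_⟩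
    rw [← emb_shift, extS_emb]
    exact hc

lemma orbitSets_extS_zero (hτ' : IsColored τ') (hy₀ : τ'.r y₀ none) :
    orbitSets (extS τ' (cls τ' y₀)) = Set.image emb '' orbitSets τ' := by
  ext S
  constructor
  · rintro ⟨x, hx, rfl⟩
    rcases cases_ground x with ⟨y, rfl⟩ | ⟨c, rfl⟩
    · rw [none_eq_emb, extS_emb] at hx
      exact ⟨obl τ' y, ⟨y, hx, rfl⟩, (oblS_emb_of_zero hτ' hy₀ hx).symm⟩
    · exfalso
      refine hx ?_
      rw [none_eq_emb, extS_last_emb, shift_image_cls hτ' c y₀, cls_eq_iff]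
      exact (rel_shift_none_iff hτ' c).2 hy₀
  · rintro ⟨S', ⟨y, hy, rfl⟩, rfl⟩
    refine ⟨emb y, ?_, (oblS_emb_of_zero hτ' hy₀ hy).symm⟩
    rw [none_eq_emb, extS_emb]
    exact hy

lemma oblS_y0 (hτ' : IsColored τ') (hy₀ : ¬ τ'.r y₀ none) :
    obl (extS τ' (cls τ' y₀)) (emb y₀) =
      emb '' obl τ' y₀ ∪ Olast := by
  ext z
  simp only [mem_obl, Set.mem_union]
  constructor
  · rintro ⟨c, hc⟩
    rw [← emb_shift] at hc
    rcases cases_ground z with ⟨w, rfl⟩ | ⟨d, rfl⟩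
    · exact Or.inl ⟨w, ⟨c, extS_emb.1 hc⟩, rfl⟩
    · exact Or.inr ⟨d, rfl⟩
  · rintro (⟨w, ⟨c, hc⟩, rfl⟩ | ⟨d, rfl⟩)
    · refine ⟨c, ?_⟩
      rw [← emb_shift, extS_emb]
      exact hc
    · refine ⟨d, ?_⟩
      rw [← emb_shift, extS_emb_last, shift_image_cls hτ' d y₀]

lemma oblS_emb_free (hτ' : IsColored τ') (hy₀ : ¬ τ'.r y₀ none) {y : ColoredSet m n'} (hy : ¬ τ'.r y none)
    (hyo : y ∉ obl τ' y₀) :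
    obl (extS τ' (cls τ' y₀)) (emb y) = emb '' obl τ' y := by
  ext z
  simp only [mem_obl]
  constructor
  · rintro ⟨c, hc⟩
    rw [← emb_shift] at hc
    rcases cases_ground z with ⟨w, rfl⟩ | ⟨d, rfl⟩
    · exact ⟨w, ⟨c, extS_emb.1 hc⟩, rfl⟩
    · exfalso
      rw [extS_emb_last, shift_image_cls hτ' d y₀, cls_eq_iff] at hc
      have h1 : shift d y₀ ∈ obl τ' y := ⟨c, hc⟩
      have h2 : obl τ' (shift d y₀) = obl τ' y := obl_eq_of_mem hτ' h1
      have h3 : obl τ' (shift d y₀) = obl τ' y₀ :=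
        obl_eq_of_mem hτ' ⟨d, τ'.refl' _⟩
      exact hyo (by rw [← h3, h2]; exact self_mem_obl τ' y)
  · rintro ⟨w, ⟨c, hc⟩, rfl⟩
    refine ⟨c, ?_⟩
    rw [← emb_shift, extS_emb]
    exact hc

lemma orbitSets_extS_free (hτ' : IsColored τ') (hy₀ : ¬ τ'.r y₀ none) :
    orbitSets (extS τ' (cls τ' y₀)) =
      insert (emb '' obl τ' y₀ ∪ Olast)
        (Set.image emb '' (orbitSets τ' \ {obl τ' y₀})) := by
  have hcolored := isColored_extS hτ' y₀
  have hy₀' : ¬ (extS τ' (cls τ' y₀)).r (emb y₀) none := by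
    rw [none_eq_emb, extS_emb]
    exact hy₀
  ext S
  constructor
  · rintro ⟨x, hx, rfl⟩
    rcases cases_ground x with ⟨y, rfl⟩ | ⟨c, rfl⟩
    · rw [none_eq_emb, extS_emb] at hx
      by_cases hmem : y ∈ obl τ' y₀
      · obtain ⟨c, hc⟩ := hmem
        have h1 : emb y ∈ obl (extS τ' (cls τ' y₀)) (emb y₀) := by
          refine ⟨c, ?_⟩
          rw [← emb_shift, extS_emb]
          exact hc
        rw [obl_eq_of_mem hcolored h1, oblS_y0 hτ' hy₀]
        exact Set.mem_insert _ _
      · have hne : obl τ' y ≠ obl τ' y₀ := by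
          intro h
          exact hmem (h ▸ self_mem_obl τ' y)
        rw [oblS_emb_free hτ' hy₀ hx hmem]
        exact Set.mem_insert_of_mem _ ⟨obl τ' y, ⟨⟨y, hx, rfl⟩, hne⟩, rfl⟩
    · have h1 : (some (Fin.last n', c) : ColoredSet m (n' + 1)) ∈
          obl (extS τ' (cls τ' y₀)) (emb y₀) := by
        refine ⟨c, ?_⟩
        rw [← emb_shift, extS_emb_last, shift_image_cls hτ' c y₀]
      rw [obl_eq_of_mem hcolored h1, oblS_y0 hτ' hy₀]
      exact Set.mem_insert _ _
  · rintro (rfl | ⟨S', ⟨⟨y, hy, rfl⟩, hne⟩, rfl⟩)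
    · exact ⟨emb y₀, hy₀', (oblS_y0 hτ' hy₀).symm⟩
    · have hyo : y ∉ obl τ' y₀ := by
        intro h
        exact hne (by rw [obl_eq_of_mem hτ' h]; exact Set.mem_singleton _)
      refine ⟨emb y, ?_, (oblS_emb_free hτ' hy₀ hy hyo).symm⟩
      rw [none_eq_emb, extS_emb]
      exact hy

end extSobl

lemma Olast_notmem_img (𝒞 : Set (Set (ColoredSet m n'))) :
    Olast (m := m) (n' := n') ∉ Set.image emb '' 𝒞 := by
  rintro ⟨S', _, h⟩
  have h0 : (some (Fin.last n', (0 : ZMod m)) : ColoredSet m (n' + 1)) ∈ Olast := ⟨0, rfl⟩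
  rw [← h] at h0
  obtain ⟨y, _, hy⟩ := h0
  exact emb_ne_last y 0 hy

lemma img_injOn (𝒞 : Set (Set (ColoredSet m n'))) : Set.InjOn (Set.image emb) 𝒞 :=
  fun _ _ _ _ h => Set.image_injective.2 emb_injective h

lemma ncard_img_img (𝒞 : Set (Set (ColoredSet m n'))) :
    (Set.image emb '' 𝒞).ncard = 𝒞.ncard :=
  Set.ncard_image_of_injective _ (Set.image_injective.2 emb_injective)

lemma finprod_img (𝒞 : Set (Set (ColoredSet m n'))) :
    ∏ᶠ S ∈ Set.image emb '' 𝒞, ((S.ncard / m - 1).factorial : ℤ) =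
      ∏ᶠ S' ∈ 𝒞, ((S'.ncard / m - 1).factorial : ℤ) := by
  rw [finprod_mem_image (img_injOn 𝒞)]
  exact finprod_mem_congr rfl (fun S _ => by rw [ncard_emb_image])

lemma kk_extN : kk (extN τ') = kk τ' + 1 := by
  rw [kk, orbitSets_extN, Set.ncard_insert_of_notMem (Olast_notmem_img _) (Set.toFinite _),
    ncard_img_img, kk]

lemma FF_extN (hτ' : IsColored τ') : FF m (n' + 1) (extN τ') = FF m n' τ' := by
  rw [FF, FF, kk_extN, Nat.succ_sub_succ, ll, zsize_extN, ← ll, orbitSets_extN,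
    finprod_mem_insert _ (Olast_notmem_img _) (Set.toFinite _), finprod_img, ncard_Olast,
    Nat.div_self (Nat.pos_of_ne_zero (NeZero.ne m))]
  norm_num

lemma cls_eq_zeroblock (hτ' : IsColored τ') {y₀ : ColoredSet m n'} (hy₀ : τ'.r y₀ none) :
    cls τ' y₀ = {x | τ'.r x none} := by
  ext z
  simp only [mem_cls, Set.mem_setOf_eq]
  exact ⟨fun h => τ'.trans' (τ'.symm' h) hy₀, fun h => τ'.trans' hy₀ (τ'.symm' h)⟩

lemma FF_extS_zero (hτ' : IsColored τ') {y₀ : ColoredSet m n'} (hy₀ : τ'.r y₀ none) :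
    FF m (n' + 1) (extS τ' (cls τ' y₀)) = -(((cls τ' y₀).ncard : ℤ)) * FF m n' τ' := by
  have hm0 : 0 < m := Nat.pos_of_ne_zero (NeZero.ne m)
  have hkk : kk (extS τ' (cls τ' y₀)) = kk τ' := by
    rw [kk, orbitSets_extS_zero hτ' hy₀, ncard_img_img, kk]
  have hll : ll (extS τ' (cls τ' y₀)) = ll τ' + 1 := by
    rw [ll, zsize_extS_zero hτ' hy₀]
    have hzz := zsize_eq (τ := τ') hτ'
    have h1 : zsize τ' + m - 1 = m * ll τ' + m := by omega
    rw [h1, ← Nat.mul_succ, Nat.mul_div_cancel_left _ hm0]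
  have hcard : (cls τ' y₀).ncard = zsize τ' := by
    rw [cls_eq_zeroblock hτ' hy₀, ← zsize_eq_ncard]
  rw [FF, FF, hkk, hll, Finset.prod_range_succ, orbitSets_extS_zero hτ' hy₀, finprod_img,
    hcard, Nat.succ_sub (kk_le hτ'), pow_succ]
  have : ((ll τ' * m + 1 : ℕ) : ℤ) = (zsize τ' : ℤ) := by
    rw [zsize_eq hτ']
    push_cast
    ring
  rw [this]
  ring

lemma FF_extS_free (hτ' : IsColored τ') {y₀ : ColoredSet m n'} (hy₀ : ¬ τ'.r y₀ none) :
    FF m (n' + 1) (extS τ' (cls τ' y₀)) = -(((cls τ' y₀).ncard : ℤ)) * FF m n' τ' := by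
  have hm0 : 0 < m := Nat.pos_of_ne_zero (NeZero.ne m)
  set b₀ := Nat.card {z // τ'.r y₀ z} with hb₀
  have hb₀pos : 0 < b₀ := by
    haveI : Nonempty {z // τ'.r y₀ z} := ⟨⟨y₀, τ'.refl' y₀⟩⟩
    exact Nat.card_pos
  have hclscard : (cls τ' y₀).ncard = b₀ := Nat.card_coe_set_eq _
  have hoblmem : obl τ' y₀ ∈ orbitSets τ' := obl_mem_orbitSets hy₀
  have hkk' : 1 ≤ kk τ' := by
    rw [kk]
    exact (Set.ncard_pos (Set.toFinite _)).2 ⟨_, hoblmem⟩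
  set M : Set (ColoredSet m (n' + 1)) := emb '' obl τ' y₀ ∪ Olast with hM
  have hMcard : M.ncard = m * b₀ + m := by
    rw [hM, Set.ncard_union_eq (emb_image_disjoint_Olast _) (Set.toFinite _) (Set.toFinite _),
      ncard_emb_image, ncard_Olast, ncard_obl hτ' hy₀]
  have hMnotmem : M ∉ Set.image emb '' (orbitSets τ' \ {obl τ' y₀}) := by
    rintro ⟨S', _, h⟩
    have h0 : (some (Fin.last n', (0 : ZMod m)) : ColoredSet m (n' + 1)) ∈ M :=
      Or.inr ⟨0, rfl⟩
    rw [← h] at h0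
    obtain ⟨y, _, hy⟩ := h0
    exact emb_ne_last y 0 hy
  have hkk : kk (extS τ' (cls τ' y₀)) = kk τ' := by
    rw [kk, orbitSets_extS_free hτ' hy₀,
      Set.ncard_insert_of_notMem hMnotmem (Set.toFinite _), ncard_img_img,
      Set.ncard_diff_singleton_of_mem hoblmem, ← kk]
    omega
  have hzs : zsize (extS τ' (cls τ' y₀)) = zsize τ' := zsize_extS_free hτ' hy₀
  have hfM : ((M.ncard / m - 1).factorial : ℤ) = (b₀.factorial : ℤ) := by
    rw [hMcard]
    have : m * b₀ + m = m * (b₀ + 1) := by ring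
    rw [this, Nat.mul_div_cancel_left _ hm0]
    simp
  have hfobl : (((obl τ' y₀).ncard / m - 1).factorial : ℤ) = ((b₀ - 1).factorial : ℤ) := by
    rw [ncard_obl hτ' hy₀, Nat.mul_div_cancel_left _ hm0]
  have hsplit : orbitSets τ' = insert (obl τ' y₀) (orbitSets τ' \ {obl τ' y₀}) := by
    rw [Set.insert_diff_singleton, Set.insert_eq_of_mem hoblmem]
  rw [FF, FF, hkk, ll, hzs, ← ll, orbitSets_extS_free hτ' hy₀,
    finprod_mem_insert _ hMnotmem (Set.toFinite _), finprod_img, hfM,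
    Nat.succ_sub (kk_le hτ'), pow_succ, hclscard]
  conv_rhs => rw [hsplit, finprod_mem_insert _ (by simp) (Set.toFinite _), hfobl]
  have hfact : (b₀.factorial : ℤ) = (b₀ : ℤ) * ((b₀ - 1).factorial : ℤ) := by
    obtain ⟨b, hb⟩ : ∃ b, b₀ = b + 1 := ⟨b₀ - 1, by omega⟩
    rw [hb, Nat.succ_sub_one, Nat.factorial_succ]
    push_cast
    ring
  rw [hfact]
  ring

instance setoidFinite {N : ℕ} : Finite (Setoid (ColoredSet m N)) :=
  Finite.of_injective (fun σ => σ.r)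
    (fun a b h => Setoid.ext fun x y => iff_of_eq (congrFun (congrFun h x) y))

lemma extN_ne_extS (τ' : Setoid (ColoredSet m n')) (y₀ : ColoredSet m n') :
    extN τ' ≠ extS τ' (cls τ' y₀) := by
  intro h
  have h1 : (extS τ' (cls τ' y₀)).r x0 (emb y₀) := by
    rw [show (x0 : ColoredSet m (n' + 1)) = some (Fin.last n', 0) from rfl, extS_last_emb,
      shift_zero_image]
  rw [← h] at h1
  exact extN_last_emb h1

lemma extS_injOn (τ' : Setoid (ColoredSet m n')) {σ : Setoid (ColoredSet m (n' + 1))} :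
    Set.InjOn (extS τ') (tgt τ' σ) := by
  rintro S₁ ⟨y₁, _, rfl⟩ S₂ ⟨y₂, _, rfl⟩ h
  have h1 : (extS τ' (cls τ' y₁)).r x0 (emb y₁) := by
    rw [show (x0 : ColoredSet m (n' + 1)) = some (Fin.last n', 0) from rfl, extS_last_emb,
      shift_zero_image]
  rw [h] at h1
  rw [show (x0 : ColoredSet m (n' + 1)) = some (Fin.last n', 0) from rfl, extS_last_emb,
    shift_zero_image] at h1
  rw [h1]

lemma fiber_sum {σ : Setoid (ColoredSet m (n' + 1))} (hσ : IsColored σ)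
    {τ' : Setoid (ColoredSet m n')} (hτ' : IsColored τ') (hle : τ' ≤ Setoid.comap emb σ) :
    ∑ᶠ τ ∈ {τ : Setoid (ColoredSet m (n' + 1)) |
        IsColored τ ∧ τ ≤ σ ∧ Setoid.comap emb τ = τ'}, FF m (n' + 1) τ =
      (1 - ((Wset σ).ncard : ℤ)) * FF m n' τ' := by
  classical
  rw [fib_eq hσ hτ' hle]
  have hnotmem : extN τ' ∉ extS τ' '' tgt τ' σ := by
    rintro ⟨S, ⟨y₀, _, rfl⟩, h⟩
    exact extN_ne_extS τ' y₀ h.symm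
  rw [finsum_mem_insert _ hnotmem ((Set.toFinite _).image _), FF_extN hτ',
    finsum_mem_image (extS_injOn τ')]
  have hcongr : ∀ S ∈ tgt τ' σ, FF m (n' + 1) (extS τ' S) = -((S.ncard : ℤ)) * FF m n' τ' := by
    rintro S ⟨y₀, _, rfl⟩
    by_cases hz : τ'.r y₀ none
    · exact FF_extS_zero hτ' hz
    · exact FF_extS_free hτ' hz
  rw [finsum_mem_congr rfl hcongr]
  have hfin : (tgt τ' σ).Finite := Set.toFinite _
  have hdistrib : ∑ᶠ S ∈ tgt τ' σ, (-((S.ncard : ℤ)) * FF m n' τ') =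
      -(((∑ᶠ S ∈ tgt τ' σ, S.ncard : ℕ) : ℤ)) * FF m n' τ' := by
    rw [finsum_mem_eq_finite_toFinset_sum _ hfin, finsum_mem_eq_finite_toFinset_sum _ hfin]
    push_cast
    rw [← Finset.sum_mul, ← Finset.sum_neg_distrib]
  rw [hdistrib]
  have hsat : ∑ᶠ S ∈ tgt τ' σ, S.ncard = (Wset σ).ncard := by
    refine sum_ncard_classes τ' (Wset σ) ?_
    intro y hy z hz
    exact σ.trans' hy ((Setoid.le_def.1 hle) hz)
  rw [hsat]
  ring

lemma isColored_comap {σ : Setoid (ColoredSet m (n' + 1))} (hσ : IsColored σ) :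
    IsColored (Setoid.comap emb σ) := by
  constructor
  · intro c a b h
    show σ.r (emb (shift c a)) (emb (shift c b))
    rw [emb_shift, emb_shift]
    exact hσ.1 c _ _ h
  · intro c y hy h
    have h' : σ.r (shift c (emb y)) (emb y) := by
      rw [← emb_shift]
      exact h
    exact hσ.2 c (emb y) (fun hn => hy hn) h'

lemma outer_decomp (σ : Setoid (ColoredSet m (n' + 1))) :
    {τ : Setoid (ColoredSet m (n' + 1)) | IsColored τ ∧ τ ≤ σ} =
      ⋃ τ' ∈ {τ' : Setoid (ColoredSet m n') | IsColored τ' ∧ τ' ≤ Setoid.comap emb σ},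
        {τ : Setoid (ColoredSet m (n' + 1)) |
          IsColored τ ∧ τ ≤ σ ∧ Setoid.comap emb τ = τ'} := by
  ext τ
  simp only [Set.mem_setOf_eq, Set.mem_iUnion]
  constructor
  · rintro ⟨hτ, hτσ⟩
    refine ⟨Setoid.comap emb τ, ⟨isColored_comap hτ, ?_⟩, hτ, hτσ, rfl⟩
    rw [Setoid.le_def]
    intro a b h
    exact (Setoid.le_def.1 hτσ) h
  · rintro ⟨τ', _, hτ, hτσ, _⟩
    exact ⟨hτ, hτσ⟩

open Classical in
theorem key : ∀ (N : ℕ) (σ : Setoid (ColoredSet m N)), IsColored σ →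
    ∑ᶠ τ ∈ {τ : Setoid (ColoredSet m N) | IsColored τ ∧ τ ≤ σ}, FF m N τ =
      if σ = ⊥ then 1 else 0 := by
  intro N
  induction N with
  | zero =>
    intro σ hσ
    have hall : ∀ τ : Setoid (ColoredSet m 0), τ = ⊥ := by
      intro τ
      refine Setoid.ext fun x y => ?_
      have hx : ∀ z : ColoredSet m 0, z = none := by
        rintro (_ | ⟨i, c⟩)
        · rfl
        · exact i.elim0
      rw [hx x, hx y, bot_r]
      exact iff_of_true (τ.refl' _) rfl
    have hset : {τ : Setoid (ColoredSet m 0) | IsColored τ ∧ τ ≤ σ} = {⊥} := by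
      ext τ
      simp only [Set.mem_setOf_eq, Set.mem_singleton_iff]
      constructor
      · intro _
        exact hall τ
      · rintro rfl
        exact ⟨colored_bot, by rw [hall σ]⟩
    rw [hset, finsum_mem_singleton, FF_bot, if_pos (hall σ)]
  | succ n' IH =>
    intro σ hσ
    have hσ' : IsColored (Setoid.comap emb σ) := isColored_comap hσ
    have hdisj : Set.PairwiseDisjoint
        {τ' : Setoid (ColoredSet m n') | IsColored τ' ∧ τ' ≤ Setoid.comap emb σ}
        (fun τ' => {τ : Setoid (ColoredSet m (n' + 1)) |
          IsColored τ ∧ τ ≤ σ ∧ Setoid.comap emb τ = τ'}) := by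
      rintro τ'₁ _ τ'₂ _ hne
      rw [Function.onFun, Set.disjoint_left]
      rintro τ ⟨_, _, h1⟩ ⟨_, _, h2⟩
      exact hne (h1 ▸ h2 ▸ rfl)
    have hbi := finsum_mem_biUnion (f := FF m (n' + 1)) hdisj (Set.toFinite _)
      (fun _ _ => Set.toFinite _)
    rw [outer_decomp σ, hbi]
    · rw [finsum_mem_congr rfl (fun τ' hτ' => fiber_sum hσ hτ'.1 hτ'.2)]
      have hdist : ∑ᶠ τ' ∈ {τ' : Setoid (ColoredSet m n') |
            IsColored τ' ∧ τ' ≤ Setoid.comap emb σ},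
            ((1 - ((Wset σ).ncard : ℤ)) * FF m n' τ') =
          (1 - ((Wset σ).ncard : ℤ)) *
            ∑ᶠ τ' ∈ {τ' : Setoid (ColoredSet m n') |
              IsColored τ' ∧ τ' ≤ Setoid.comap emb σ}, FF m n' τ' := by
        rw [finsum_mem_eq_finite_toFinset_sum _ (Set.toFinite _),
          finsum_mem_eq_finite_toFinset_sum _ (Set.toFinite _), Finset.mul_sum]
      rw [hdist, IH _ hσ']
      by_cases hbot : σ = ⊥
      · subst hbot
        have h1 : Setoid.comap emb (⊥ : Setoid (ColoredSet m (n' + 1))) = ⊥ := by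
          refine Setoid.ext fun a b => ?_
          show emb a = emb b ↔ a = b
          exact ⟨fun h => emb_injective h, fun h => h ▸ rfl⟩
        have h2 : Wset (⊥ : Setoid (ColoredSet m (n' + 1))) = ∅ := by
          ext y
          simp only [Wset, Set.mem_setOf_eq, Set.mem_empty_iff_false, iff_false]
          intro h
          exact emb_ne_last y 0 ((bot_r).1 h).symm
        rw [if_pos h1, if_pos rfl, h2]
        simp
      · rw [if_neg hbot]
        by_cases hbot' : Setoid.comap emb σ = ⊥
        · rw [if_pos hbot', mul_one]
          have hE : (Wset σ).ncard = 1 := by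
            obtain ⟨u, v, huv, hr⟩ : ∃ u v, u ≠ v ∧ σ.r u v := by
              by_contra hcon
              push_neg at hcon
              refine hbot (Setoid.ext fun x y => ?_)
              rw [bot_r]
              exact ⟨fun h => by_contra fun hne => hcon x y hne h,
                fun h => h ▸ σ.refl' x⟩
            have hW : ∃ y₁, y₁ ∈ Wset σ := by
              rcases cases_ground u with ⟨a, rfl⟩ | ⟨c, rfl⟩ <;>
                rcases cases_ground v with ⟨b, rfl⟩ | ⟨d, rfl⟩
              · exfalso
                have : (Setoid.comap emb σ).r a b := hr
                rw [hbot', bot_r] at this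
                exact huv (this ▸ rfl)
              · refine ⟨shift (-d) a, ?_⟩
                show σ.r x0 (emb (shift (-d) a))
                have h2 := hσ.1 (-d) _ _ (σ.symm' hr)
                rw [show shift (-d) (some (Fin.last n', d) : ColoredSet m (n' + 1)) =
                  x0 from by simp [x0], ← emb_shift] at h2
                exact h2
              · refine ⟨shift (-c) b, ?_⟩
                show σ.r x0 (emb (shift (-c) b))
                have h2 := hσ.1 (-c) _ _ hr
                rw [show shift (-c) (some (Fin.last n', c) : ColoredSet m (n' + 1)) =
                  x0 from by simp [x0], ← emb_shift] at h2
                exact h2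
              · have hcd : c ≠ d := fun h => huv (h ▸ rfl)
                have hx0 : σ.r x0 none := by
                  by_contra hx0n
                  have h1 : σ.r (shift (d - c) x0) x0 := by
                    have := hσ.1 (-c) _ _ (σ.symm' hr)
                    rw [show shift (-c) (some (Fin.last n', d) : ColoredSet m (n' + 1)) =
                      shift (d - c) x0 from by simp [x0, sub_eq_add_neg],
                      show shift (-c) (some (Fin.last n', c) : ColoredSet m (n' + 1)) =
                      x0 from by simp [x0]] at this
                    exact this
                  have := hσ.2 _ _ hx0n h1
                  exact hcd (by linear_combination -this)
                exact ⟨none, hx0⟩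
            obtain ⟨y₁, hy₁⟩ := hW
            have hWeq : Wset σ = {y₁} := by
              ext y
              simp only [Set.mem_singleton_iff]
              constructor
              · intro hy
                have : (Setoid.comap emb σ).r y y₁ := σ.trans' (σ.symm' hy) hy₁
                rw [hbot', bot_r] at this
                exact this
              · rintro rfl
                exact hy₁
            rw [hWeq, Set.ncard_singleton]
          rw [hE]
          ring
        · rw [if_neg hbot', mul_zero]

end step

end Stmt17


open Stmt17 in
/-- let `P` be the poset of colored set partitions of type `(m,n)`
ordered by refinement, whose minimum element is `⊥` (the partition into the block `{0}`
and singletons), and let `μ` be its Möbius function, i.e. `μ = 1` at the minimum and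
`μ x = −Σ_{y<x} μ y` otherwise.  If `σ ∈ P` has `km+1` blocks, its zero block has
cardinality `lm+1`, and `B 1, …, B k` are representatives of one block from each of the
`k` orbits of non-zero blocks (pairwise in distinct orbits), then
`μ(0̂, σ) = (−1)^{n−k} · (Π_{j=0}^{l−1} (jm+1)) · Π_{j=1}^{k} (b_j − 1)!`,
where `b_j` is the cardinality of the block of `B j`. -/
theorem stmt17 (m n : ℕ) (hm : 1 ≤ m) (hn : 1 ≤ n)
    (μ : {σ : Setoid (ColoredSet m n) // IsColored σ} → ℤ)
    (hμbot : ∀ x : {σ : Setoid (ColoredSet m n) // IsColored σ}, x.1 = ⊥ → μ x = 1)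
    (hμrec : ∀ x : {σ : Setoid (ColoredSet m n) // IsColored σ}, x.1 ≠ ⊥ →
      μ x = -∑ᶠ y ∈ {y : {σ : Setoid (ColoredSet m n) // IsColored σ} | y.1 < x.1}, μ y)
    (σ : Setoid (ColoredSet m n)) (hσ : IsColored σ) (k l : ℕ)
    (hblocks : Nat.card (Quotient σ) = k * m + 1)
    (hzero : Nat.card {x : ColoredSet m n // σ.r x none} = l * m + 1)
    (B : Fin k → ColoredSet m n)
    (hBnz : ∀ j, ¬ σ.r (B j) none)
    (hBdist : ∀ i j : Fin k, i ≠ j → ∀ c : ZMod m, ¬ σ.r (shift c (B i)) (B j)) :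
    μ ⟨σ, hσ⟩ =
      (-1 : ℤ) ^ (n - k) * (∏ j ∈ range l, ((j * m + 1 : ℕ) : ℤ)) *
        ∏ j : Fin k,
          ((Nat.card {x : ColoredSet m n // σ.r x (B j)} - 1).factorial : ℤ) := by
  haveI : NeZero m := ⟨by omega⟩
  have hm0 : 0 < m := hm
  have main : ∀ σ₀ : Setoid (ColoredSet m n), ∀ hσ₀ : IsColored σ₀,
      μ ⟨σ₀, hσ₀⟩ = FF m n σ₀ := by
    intro σ₀
    induction σ₀ using WellFoundedLT.induction with
    | _ σ₀ IH =>
      intro hσ₀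
      by_cases hb : σ₀ = ⊥
      · rw [hμbot ⟨σ₀, hσ₀⟩ hb, hb, FF_bot]
      · rw [hμrec ⟨σ₀, hσ₀⟩ hb]
        have h2 : ∑ᶠ y ∈ {y : {σ' : Setoid (ColoredSet m n) // IsColored σ'} | y.1 < σ₀}, μ y
            = ∑ᶠ y ∈ {y : {σ' : Setoid (ColoredSet m n) // IsColored σ'} | y.1 < σ₀},
              FF m n y.1 :=
          finsum_mem_congr rfl (fun y hy => IH y.1 hy y.2)
        have h3 : {τ : Setoid (ColoredSet m n) | IsColored τ ∧ τ < σ₀} =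
            Subtype.val '' {y : {σ' : Setoid (ColoredSet m n) // IsColored σ'} | y.1 < σ₀} := by
          ext τ
          constructor
          · rintro ⟨hc, hlt⟩
            exact ⟨⟨τ, hc⟩, hlt, rfl⟩
          · rintro ⟨y, hy, rfl⟩
            exact ⟨y.2, hy⟩
        have h4 : ∑ᶠ τ ∈ {τ : Setoid (ColoredSet m n) | IsColored τ ∧ τ < σ₀}, FF m n τ =
            ∑ᶠ y ∈ {y : {σ' : Setoid (ColoredSet m n) // IsColored σ'} | y.1 < σ₀},
              FF m n y.1 := by
          rw [h3, finsum_mem_image (fun a _ b _ h => Subtype.ext h)]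
        have h5 := key n σ₀ hσ₀
        rw [if_neg hb] at h5
        have h6 : {τ : Setoid (ColoredSet m n) | IsColored τ ∧ τ ≤ σ₀} =
            insert σ₀ {τ : Setoid (ColoredSet m n) | IsColored τ ∧ τ < σ₀} := by
          ext τ
          simp only [Set.mem_setOf_eq, Set.mem_insert_iff]
          constructor
          · rintro ⟨hc, hle⟩
            rcases lt_or_eq_of_le hle with h | h
            · exact Or.inr ⟨hc, h⟩
            · exact Or.inl h
          · rintro (rfl | ⟨hc, hlt⟩)
            · exact ⟨hσ₀, le_refl _⟩
            · exact ⟨hc, le_of_lt hlt⟩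
        have h7 : σ₀ ∉ {τ : Setoid (ColoredSet m n) | IsColored τ ∧ τ < σ₀} :=
          fun h => lt_irrefl _ h.2
        rw [h6, finsum_mem_insert _ h7 (Set.toFinite _)] at h5
        rw [h2, ← h4]
        linarith [h5]
  rw [main σ hσ]
  have hll : ll σ = l := by
    rw [ll, show zsize σ = l * m + 1 from hzero, Nat.add_sub_cancel, Nat.mul_div_cancel _ hm0]
  have hkk : kk σ = k := by
    have h := card_quotient (τ := σ) hσ
    rw [hblocks] at h
    have h2 : m * k = m * kk σ := by
      rw [mul_comm m k]
      omega
    exact (Nat.eq_of_mul_eq_mul_left hm0 h2).symm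
  have hginj : Function.Injective (fun j : Fin k => obl σ (B j)) := by
    intro i j h
    by_contra hne
    have h' : obl σ (B i) = obl σ (B j) := h
    have hmem : B j ∈ obl σ (B i) := by
      rw [h']
      exact self_mem_obl σ (B j)
    obtain ⟨c, hc⟩ := hmem
    exact hBdist i j hne c hc
  have hsub : Set.range (fun j : Fin k => obl σ (B j)) ⊆ orbitSets σ := by
    rintro S ⟨j, rfl⟩
    exact obl_mem_orbitSets (hBnz j)
  have hrk : (Set.range (fun j : Fin k => obl σ (B j))).ncard = k := by
    rw [← Nat.card_coe_set_eq, Nat.card_range_of_injective hginj,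
      Nat.card_eq_fintype_card, Fintype.card_fin]
  have hrange : Set.range (fun j : Fin k => obl σ (B j)) = orbitSets σ := by
    refine Set.eq_of_subset_of_ncard_le hsub ?_ (Set.toFinite _)
    rw [hrk, show (orbitSets σ).ncard = kk σ from rfl, hkk]
  have hprod : ∏ᶠ S ∈ orbitSets σ, ((S.ncard / m - 1).factorial : ℤ) =
      ∏ j : Fin k, ((Nat.card {x : ColoredSet m n // σ.r x (B j)} - 1).factorial : ℤ) := by
    rw [← hrange, finprod_mem_range hginj, finprod_eq_prod_of_fintype]
    refine Finset.prod_congr rfl (fun j _ => ?_)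
    have hsymm : Nat.card {y // σ.r (B j) y} = Nat.card {x : ColoredSet m n // σ.r x (B j)} :=
      Nat.card_congr ⟨fun p => ⟨p.1, σ.symm' p.2⟩, fun p => ⟨p.1, σ.symm' p.2⟩,
        fun _ => rfl, fun _ => rfl⟩
    rw [ncard_obl hσ (hBnz j), Nat.mul_div_cancel_left _ hm0, hsymm]
  rw [FF, hll, hkk, hprod]
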